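/- Implicit-function sensitivity of the group Lasso: if β* is the unique group Lasso solution at y with block support I and the strict condition ‖X_b^T(y − X β*)‖ < λ holds for all blocks b ∉ I, then there is a neighborhood of y on which the solution map is C¹ with constant block support I, and the differential of the solution restricted to I equals (X_I^T X_I + λ δ ∘ P)^{-1} X_I^T, where δ ∘ P is the block-diagonal map v ↦ (P_{β*_b^⊥}(v_b)/‖β*_b‖)_{b∈I}. -/

import Mathlib

open Matrix Finset

/-- Euclidean norm of the subvector of `β` on the block `k`. -/
noncomputable def blockNorm {N K : ℕ} (c : Fin N → Fin K) (β : Fin N → ℝ) (k : Fin K) : ℝ :=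
  Real.sqrt (∑ i ∈ Finset.univ.filter (fun i => c i = k), β i ^ 2)

/-- The group Lasso objective. -/
noncomputable def groupLassoObj {Q N K : ℕ} (X : Matrix (Fin Q) (Fin N) ℝ)
    (y : Fin Q → ℝ) (lam : ℝ) (c : Fin N → Fin K) (β : Fin N → ℝ) : ℝ :=
  (1 / 2) * (∑ i, (y i - X.mulVec β i) ^ 2) + lam * ∑ k, blockNorm c β k

namespace GLasso

variable {Q N K : ℕ}

lemma blockNorm_nonneg (c : Fin N → Fin K) (β : Fin N → ℝ) (k : Fin K) :
    0 ≤ blockNorm c β k := Real.sqrt_nonneg _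

lemma blockNorm_sq (c : Fin N → Fin K) (β : Fin N → ℝ) (k : Fin K) :
    blockNorm c β k ^ 2 = ∑ i ∈ Finset.univ.filter (fun i => c i = k), β i ^ 2 :=
  Real.sq_sqrt (Finset.sum_nonneg fun _ _ => sq_nonneg _)

lemma blockNorm_pos (c : Fin N → Fin K) (β : Fin N → ℝ) (k : Fin K)
    (h : ∃ i, c i = k ∧ β i ≠ 0) : 0 < blockNorm c β k := by
  obtain ⟨i, hik, hi⟩ := h
  refine Real.sqrt_pos.2 (Finset.sum_pos' (fun _ _ => sq_nonneg _) ⟨i, ?_, ?_⟩)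
  · simp [hik]
  · exact lt_of_le_of_ne (sq_nonneg _) (Ne.symm (pow_ne_zero _ hi))

lemma blockNorm_zero (c : Fin N → Fin K) (β : Fin N → ℝ) (k : Fin K)
    (h : ∀ i, c i = k → β i = 0) : blockNorm c β k = 0 := by
  have : ∑ i ∈ Finset.univ.filter (fun i => c i = k), β i ^ 2 = 0 := by
    refine Finset.sum_eq_zero fun i hi => ?_
    rw [h i (by simpa using hi)]; ring
  rw [blockNorm, this, Real.sqrt_zero]

lemma exists_ne_zero_of_blockNorm_ne_zero {c : Fin N → Fin K} {β : Fin N → ℝ} {k : Fin K}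
    (h : blockNorm c β k ≠ 0) : ∃ i, c i = k ∧ β i ≠ 0 := by
  by_contra hc
  push_neg at hc
  exact h (blockNorm_zero c β k fun i hik => hc i hik)

lemma cs_sqrt {ι : Type*} (s : Finset ι) (a b : ι → ℝ) :
    ∑ i ∈ s, a i * b i ≤ Real.sqrt (∑ i ∈ s, a i ^ 2) * Real.sqrt (∑ i ∈ s, b i ^ 2) := by
  calc ∑ i ∈ s, a i * b i ≤ √((∑ i ∈ s, a i * b i) ^ 2) := by
        rw [Real.sqrt_sq_eq_abs]; exact le_abs_self _
    _ ≤ √((∑ i ∈ s, a i ^ 2) * ∑ i ∈ s, b i ^ 2) :=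
        Real.sqrt_le_sqrt (Finset.sum_mul_sq_le_sq_mul_sq s a b)
    _ = _ := Real.sqrt_mul (Finset.sum_nonneg fun _ _ => sq_nonneg _) _


lemma kkt_sufficient (X : Matrix (Fin Q) (Fin N) ℝ) {lam : ℝ} (hlam : 0 < lam)
    (c : Fin N → Fin K) (w : Fin Q → ℝ) (β : Fin N → ℝ)
    (hstat : ∀ i, blockNorm c β (c i) ≠ 0 →
      (X.transpose * X).mulVec β i - X.transpose.mulVec w i
        + lam * (β i / blockNorm c β (c i)) = 0)
    (hdual : ∀ k, (∀ i, c i = k → β i = 0) →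
      blockNorm c (X.transpose.mulVec (w - X.mulVec β)) k ≤ lam) :
    IsMinOn (groupLassoObj X w lam c) Set.univ β := by
  rw [isMinOn_iff]
  intro β' _
  set r : Fin Q → ℝ := w - X.mulVec β with hr
  set d : Fin N → ℝ := β' - β with hd
  have hXtr : ∀ i, blockNorm c β (c i) ≠ 0 →
      X.transpose.mulVec r i = lam * β i / blockNorm c β (c i) := by
    intro i hi
    have h1 := hstat i hi
    have : X.transpose.mulVec r i
        = X.transpose.mulVec w i - (X.transpose * X).mulVec β i := by
      rw [hr, Matrix.mulVec_sub, ← Matrix.mulVec_mulVec]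
      simp [Pi.sub_apply]
    rw [this]; field_simp at h1 ⊢; linarith
  -- pointwise expansion of residual at β'
  have hres : ∀ q, w q - X.mulVec β' q = r q - X.mulVec d q := by
    intro q
    rw [hd, Matrix.mulVec_sub]
    simp [hr, Pi.sub_apply]
  -- T = ⟨r, X d⟩ = ∑_i d i (Xᵀ r)_i
  have hT : ∑ q, r q * X.mulVec d q = ∑ i, d i * X.transpose.mulVec r i := by
    simp only [Matrix.mulVec, dotProduct, Matrix.transpose_apply]
    simp_rw [Finset.mul_sum]
    rw [Finset.sum_comm]
    exact Finset.sum_congr rfl fun i _ => Finset.sum_congr rfl fun q _ => by ring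
  -- blockwise bound
  have hblock : ∀ k, ∑ i ∈ Finset.univ.filter (fun i => c i = k), d i * X.transpose.mulVec r i
      ≤ lam * (blockNorm c β' k - blockNorm c β k) := by
    intro k
    by_cases hz : ∀ i, c i = k → β i = 0
    · have hn0 : blockNorm c β k = 0 := blockNorm_zero c β k hz
      have : ∑ i ∈ Finset.univ.filter (fun i => c i = k), d i * X.transpose.mulVec r i
          = ∑ i ∈ Finset.univ.filter (fun i => c i = k), β' i * X.transpose.mulVec r i := by
        refine Finset.sum_congr rfl fun i hi => ?_
        have : β i = 0 := hz i (by simpa using hi)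
        simp [hd, Pi.sub_apply, this]
      rw [this, hn0, sub_zero]
      calc ∑ i ∈ Finset.univ.filter (fun i => c i = k), β' i * X.transpose.mulVec r i
          ≤ Real.sqrt (∑ i ∈ Finset.univ.filter (fun i => c i = k), β' i ^ 2)
            * Real.sqrt (∑ i ∈ Finset.univ.filter (fun i => c i = k),
                (X.transpose.mulVec r i) ^ 2) := cs_sqrt _ _ _
        _ = blockNorm c β' k * blockNorm c (X.transpose.mulVec r) k := rfl
        _ ≤ blockNorm c β' k * lam := by
            exact mul_le_mul_of_nonneg_left (hdual k hz) (blockNorm_nonneg c β' k)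
        _ = lam * blockNorm c β' k := mul_comm _ _
    · push_neg at hz
      obtain ⟨i0, hi0k, hi0⟩ := hz
      have hnpos : 0 < blockNorm c β k := blockNorm_pos c β k ⟨i0, hi0k, hi0⟩
      set n := blockNorm c β k with hnn
      have hsum : ∑ i ∈ Finset.univ.filter (fun i => c i = k), d i * X.transpose.mulVec r i
          = lam / n * ((∑ i ∈ Finset.univ.filter (fun i => c i = k), β i * β' i) - n ^ 2) := by
        rw [blockNorm_sq c β k, ← Finset.sum_sub_distrib, Finset.mul_sum]
        refine Finset.sum_congr rfl fun i hi => ?_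
        have hik : c i = k := by simpa using hi
        have := hXtr i (by rw [hik, ← hnn]; exact hnpos.ne')
        rw [hik, ← hnn] at this
        rw [this, hd]
        simp only [Pi.sub_apply]
        field_simp
      rw [hsum]
      have hcs : ∑ i ∈ Finset.univ.filter (fun i => c i = k), β i * β' i
          ≤ n * blockNorm c β' k := by
        have := cs_sqrt (Finset.univ.filter (fun i => c i = k)) (fun i => β i) (fun i => β' i)
        exact this
      have h2 : lam / n * ((∑ i ∈ Finset.univ.filter (fun i => c i = k), β i * β' i) - n ^ 2)
          ≤ lam / n * (n * blockNorm c β' k - n ^ 2) := by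
        apply mul_le_mul_of_nonneg_left _ (le_of_lt (div_pos hlam hnpos))
        linarith
      refine h2.trans (le_of_eq ?_)
      field_simp
  -- put it together
  have hTle : ∑ q, r q * X.mulVec d q
      ≤ lam * ((∑ k, blockNorm c β' k) - ∑ k, blockNorm c β k) := by
    rw [hT]
    rw [← Finset.sum_fiberwise_of_maps_to (fun i _ => Finset.mem_univ (c i))
      (fun i => d i * X.transpose.mulVec r i)]
    calc ∑ k, ∑ i ∈ Finset.univ.filter (fun i => c i = k), d i * X.transpose.mulVec r i
        ≤ ∑ k, lam * (blockNorm c β' k - blockNorm c β k) :=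
          Finset.sum_le_sum fun k _ => hblock k
      _ = lam * ((∑ k, blockNorm c β' k) - ∑ k, blockNorm c β k) := by
          rw [← Finset.mul_sum, Finset.sum_sub_distrib]
  have hexp : ∑ q, (w q - X.mulVec β' q) ^ 2
      = ∑ q, r q ^ 2 - 2 * ∑ q, r q * X.mulVec d q + ∑ q, (X.mulVec d q) ^ 2 := by
    have : ∀ q, (w q - X.mulVec β' q) ^ 2
        = r q ^ 2 - 2 * (r q * X.mulVec d q) + (X.mulVec d q) ^ 2 := by
      intro q; rw [hres q]; ring
    rw [Finset.sum_congr rfl fun q _ => this q]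
    rw [Finset.sum_add_distrib, Finset.sum_sub_distrib, ← Finset.mul_sum]
  have hsq : 0 ≤ ∑ q, (X.mulVec d q) ^ 2 := Finset.sum_nonneg fun _ _ => sq_nonneg _
  have hrq : ∑ i, (w i - X.mulVec β i) ^ 2 = ∑ q, r q ^ 2 := by
    refine Finset.sum_congr rfl fun q _ => ?_
    simp [hr]
  rw [mul_sub] at hTle
  simp only [groupLassoObj]
  rw [hexp, hrq]
  linarith

lemma kkt_stat (X : Matrix (Fin Q) (Fin N) ℝ) (lam : ℝ)
    (c : Fin N → Fin K) (w : Fin Q → ℝ) (β : Fin N → ℝ)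
    (hmin : IsMinOn (groupLassoObj X w lam c) Set.univ β)
    (i : Fin N) (hn : blockNorm c β (c i) ≠ 0) :
    (X.transpose * X).mulVec β i - X.transpose.mulVec w i
      + lam * (β i / blockNorm c β (c i)) = 0 := by
  set n := blockNorm c β (c i) with hnn
  have hnpos : 0 < n := lt_of_le_of_ne (blockNorm_nonneg c β (c i)) (Ne.symm hn)
  set βt : ℝ → Fin N → ℝ := fun t j => β j + t * (if j = i then (1:ℝ) else 0) with hβt
  set φ : ℝ → ℝ := fun t => groupLassoObj X w lam c (βt t) with hφdef
  have hβt0 : βt 0 = β := by funext j; simp [hβt]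
  have hloc : IsLocalMin φ 0 := by
    refine Filter.Eventually.of_forall fun t => ?_
    have := isMinOn_iff.1 hmin (βt t) trivial
    simpa [hφdef, hβt0] using this
  have hmv : ∀ t q, X.mulVec (βt t) q = X.mulVec β q + t * X q i := by
    intro t q
    simp only [Matrix.mulVec, dotProduct, hβt]
    have : ∀ j, X q j * (β j + t * (if j = i then (1:ℝ) else 0))
        = X q j * β j + (if j = i then X q j * t else 0) := by
      intro j; by_cases h : j = i <;> simp [h] <;> ring
    rw [Finset.sum_congr rfl fun j _ => this j, Finset.sum_add_distrib,
      Finset.sum_ite_eq' Finset.univ i (fun j => X q j * t)]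
    simp [mul_comm]
  -- derivative of the quadratic part
  have hq : ∀ q : Fin Q, HasDerivAt (fun t => (w q - X.mulVec (βt t) q) ^ 2)
      (2 * (w q - X.mulVec β q) * (-(X q i))) 0 := by
    intro q
    have h0 : (fun t => (w q - X.mulVec (βt t) q) ^ 2)
        = fun t => (w q - (X.mulVec β q + t * X q i)) ^ 2 := funext fun t => by rw [hmv]
    rw [h0]
    have h1 : HasDerivAt (fun t : ℝ => w q - (X.mulVec β q + t * X q i)) (-(X q i)) 0 := by
      simpa using (((hasDerivAt_id (0:ℝ)).mul_const (X q i)).const_add (X.mulVec β q)).const_sub (w q)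
    simpa using h1.fun_pow 2
  have hquad : HasDerivAt (fun t => (1/2 : ℝ) * ∑ q, (w q - X.mulVec (βt t) q) ^ 2)
      ((1/2 : ℝ) * ∑ q, 2 * (w q - X.mulVec β q) * (-(X q i))) 0 := by
    exact (HasDerivAt.fun_sum fun q _ => hq q).const_mul _
  -- derivative of each block norm
  have hbk : ∀ k : Fin K, HasDerivAt (fun t => blockNorm c (βt t) k)
      (if k = c i then β i / n else 0) 0 := by
    intro k
    by_cases hk : k = c i
    · rw [if_pos hk]
      have hS : HasDerivAt (fun t => ∑ j ∈ Finset.univ.filter (fun j => c j = k), βt t j ^ 2)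
          (∑ j ∈ Finset.univ.filter (fun j => c j = k),
            2 * (β j + 0 * (if j = i then (1:ℝ) else 0)) ^ 1
              * (1 * (if j = i then (1:ℝ) else 0))) 0 := by
        refine HasDerivAt.fun_sum fun j _ => ?_
        exact (((hasDerivAt_id (0:ℝ)).mul_const _).const_add (β j)).pow 2
      have hS0 : (∑ j ∈ Finset.univ.filter (fun j => c j = k), βt 0 j ^ 2) = n ^ 2 := by
        rw [hnn, blockNorm_sq, hk]
        exact Finset.sum_congr rfl fun j _ => by simp [hβt]
      have hS0ne : (∑ j ∈ Finset.univ.filter (fun j => c j = k), βt 0 j ^ 2) ≠ 0 := by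
        rw [hS0]; positivity
      have := hS.sqrt hS0ne
      have hd : (∑ j ∈ Finset.univ.filter (fun j => c j = k),
            2 * (β j + 0 * (if j = i then (1:ℝ) else 0)) ^ 1
              * (1 * (if j = i then (1:ℝ) else 0)))
          / (2 * Real.sqrt (∑ j ∈ Finset.univ.filter (fun j => c j = k), βt 0 j ^ 2))
          = β i / n := by
        rw [hS0, Real.sqrt_sq hnpos.le]
        have : ∀ j ∈ Finset.univ.filter (fun j => c j = k),
            2 * (β j + 0 * (if j = i then (1:ℝ) else 0)) ^ 1
              * (1 * (if j = i then (1:ℝ) else 0))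
            = if j = i then 2 * β j else 0 := by
          intro j _; by_cases h : j = i <;> simp [h]
        rw [Finset.sum_congr rfl this, Finset.sum_ite_eq' _ i (fun j => 2 * β j)]
        have hi : i ∈ Finset.univ.filter (fun j => c j = k) := by simp [hk]
        rw [if_pos hi]
        field_simp
      rw [hd] at this
      exact this
    · rw [if_neg hk]
      have : (fun t => blockNorm c (βt t) k) = fun _ => blockNorm c β k := by
        funext t
        unfold blockNorm
        congr 1
        refine Finset.sum_congr rfl fun j hj => ?_
        have hji : j ≠ i := by
          intro h; apply hk; rw [← h]; symm; simpa using (Finset.mem_filter.1 hj).2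
        simp [hβt, hji]
      rw [this]
      exact hasDerivAt_const _ _
  have hnorm : HasDerivAt (fun t => lam * ∑ k, blockNorm c (βt t) k) (lam * (β i / n)) 0 := by
    have := (HasDerivAt.fun_sum fun k (_ : k ∈ Finset.univ) => hbk k).const_mul lam
    rwa [Finset.sum_ite_eq' Finset.univ (c i) (fun _ => β i / n), if_pos (Finset.mem_univ _)] at this
  have hφ : HasDerivAt φ ((1/2 : ℝ) * ∑ q, 2 * (w q - X.mulVec β q) * (-(X q i))
      + lam * (β i / n)) 0 := by
    simp only [hφdef, groupLassoObj]
    exact hquad.add hnorm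
  have hd0 := hloc.hasDerivAt_eq_zero hφ
  have e1 : ∑ q, 2 * (w q - X.mulVec β q) * (-(X q i))
      = -2 * ∑ q, X q i * (w q - X.mulVec β q) := by
    rw [Finset.mul_sum]
    exact Finset.sum_congr rfl fun q _ => by ring
  have hswap : (X.transpose * X).mulVec β i - X.transpose.mulVec w i
      = -∑ q, X q i * (w q - X.mulVec β q) := by
    rw [← Matrix.mulVec_mulVec]
    simp only [Matrix.mulVec, dotProduct, Matrix.transpose_apply]
    rw [Finset.sum_congr rfl (fun q (_ : q ∈ Finset.univ) =>
      show X q i * (w q - ∑ j, X q j * β j) = X q i * w q - X q i * ∑ j, X q j * β j from by ring),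
      Finset.sum_sub_distrib]
    ring
  rw [e1] at hd0
  rw [hswap]
  linarith

variable (X : Matrix (Fin Q) (Fin N) ℝ) (lam : ℝ) (c : Fin N → Fin K)
  (P : Fin K → Prop) [DecidablePred P]

/-- The implicit KKT equation map. -/
noncomputable def Gmap (x : (Fin Q → ℝ) × (Fin N → ℝ)) : Fin N → ℝ := fun i =>
  if P (c i) then
    (X.transpose * X).mulVec x.2 i - X.transpose.mulVec x.1 i
      + lam * (x.2 i / blockNorm c x.2 (c i))
  else x.2 i

/-- The candidate derivative of `Gmap` at `x`, as a raw function. -/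
noncomputable def Afun (x z : (Fin Q → ℝ) × (Fin N → ℝ)) : Fin N → ℝ := fun i =>
  if P (c i) then
    (X.transpose * X).mulVec z.2 i - X.transpose.mulVec z.1 i
      + lam * (z.2 i / blockNorm c x.2 (c i)
        - x.2 i * (∑ j ∈ Finset.univ.filter (fun j => c j = c i), x.2 j * z.2 j)
            / blockNorm c x.2 (c i) ^ 3)
  else z.2 i

/-- `Afun` as a continuous linear map. -/
noncomputable def Amap (x : (Fin Q → ℝ) × (Fin N → ℝ)) :
    ((Fin Q → ℝ) × (Fin N → ℝ)) →L[ℝ] (Fin N → ℝ) :=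
  LinearMap.toContinuousLinearMap
  { toFun := fun z => Afun X lam c P x z
    map_add' := by
      intro z₁ z₂
      funext i
      by_cases h : P (c i)
      · simp only [Afun, if_pos h, Prod.snd_add, Prod.fst_add, Pi.add_apply,
          Matrix.mulVec_add]
        have hs : ∑ j ∈ Finset.univ.filter (fun j => c j = c i), x.2 j * (z₁.2 j + z₂.2 j)
            = (∑ j ∈ Finset.univ.filter (fun j => c j = c i), x.2 j * z₁.2 j)
              + ∑ j ∈ Finset.univ.filter (fun j => c j = c i), x.2 j * z₂.2 j := by
          rw [← Finset.sum_add_distrib]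
          exact Finset.sum_congr rfl fun j _ => by ring
        rw [hs]
        ring
      · simp [Afun, if_neg h]
    map_smul' := by
      intro a z
      funext i
      by_cases h : P (c i)
      · simp only [Afun, if_pos h, Prod.smul_snd, Prod.smul_fst, Pi.smul_apply,
          Matrix.mulVec_smul, smul_eq_mul, RingHom.id_apply]
        have hs : ∑ j ∈ Finset.univ.filter (fun j => c j = c i), x.2 j * (a * z.2 j)
            = a * ∑ j ∈ Finset.univ.filter (fun j => c j = c i), x.2 j * z.2 j := by
          rw [Finset.mul_sum]
          exact Finset.sum_congr rfl fun j _ => by ring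
        rw [hs]
        ring
      · simp [Afun, if_neg h] }

lemma Amap_apply (x z : (Fin Q → ℝ) × (Fin N → ℝ)) :
    Amap X lam c P x z = Afun X lam c P x z := rfl

lemma hasFDerivAt_Gmap (x : (Fin Q → ℝ) × (Fin N → ℝ))
    (hx : ∀ i, P (c i) → blockNorm c x.2 (c i) ≠ 0) :
    HasFDerivAt (Gmap X lam c P) (Amap X lam c P x) x := by
  apply hasFDerivAt_pi''
  intro i
  have heval : ∀ j, HasFDerivAt (fun z : (Fin Q → ℝ) × (Fin N → ℝ) => z.2 j)
      ((ContinuousLinearMap.proj j).comp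
        (ContinuousLinearMap.snd ℝ (Fin Q → ℝ) (Fin N → ℝ))) x :=
    fun j => ((ContinuousLinearMap.proj j).comp
        (ContinuousLinearMap.snd ℝ (Fin Q → ℝ) (Fin N → ℝ))).hasFDerivAt
  by_cases h : P (c i)
  · have hfun : (fun z : (Fin Q → ℝ) × (Fin N → ℝ) => Gmap X lam c P z i)
        = fun z => (∑ j, (X.transpose * X) i j * z.2 j) - (∑ q, X.transpose i q * z.1 q)
          + lam * (z.2 i * (Real.sqrt
              (∑ j ∈ Finset.univ.filter (fun j => c j = c i), z.2 j * z.2 j))⁻¹) := by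
      funext z
      simp only [Gmap, if_pos h, blockNorm, Matrix.mulVec, dotProduct, div_eq_mul_inv,
        pow_two]
    rw [hfun]
    set n := blockNorm c x.2 (c i) with hnn
    have hn : n ≠ 0 := hx i h
    have hnne : 0 ≤ n := blockNorm_nonneg c x.2 (c i)
    have hval : (∑ j ∈ Finset.univ.filter (fun j => c j = c i), x.2 j * x.2 j) = n ^ 2 := by
      rw [hnn, blockNorm_sq]
      exact Finset.sum_congr rfl fun j _ => (sq (x.2 j)).symm ▸ by ring
    -- derivative of the sum of squares
    have hS : HasFDerivAt
        (fun z : (Fin Q → ℝ) × (Fin N → ℝ) =>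
          ∑ j ∈ Finset.univ.filter (fun j => c j = c i), z.2 j * z.2 j)
        (∑ j ∈ Finset.univ.filter (fun j => c j = c i),
          (x.2 j • ((ContinuousLinearMap.proj j).comp
            (ContinuousLinearMap.snd ℝ (Fin Q → ℝ) (Fin N → ℝ)))
          + x.2 j • ((ContinuousLinearMap.proj j).comp
            (ContinuousLinearMap.snd ℝ (Fin Q → ℝ) (Fin N → ℝ))))) x :=
      HasFDerivAt.fun_sum fun j _ => (heval j).fun_mul (heval j)
    have hS0 : (∑ j ∈ Finset.univ.filter (fun j => c j = c i), x.2 j * x.2 j) ≠ 0 := by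
      rw [hval]; exact pow_ne_zero _ hn
    have hsqrt := hS.sqrt hS0
    have hsqrtval : Real.sqrt (∑ j ∈ Finset.univ.filter (fun j => c j = c i), x.2 j * x.2 j)
        = n := by rw [hval, Real.sqrt_sq hnne]
    have hsqrtne : Real.sqrt (∑ j ∈ Finset.univ.filter (fun j => c j = c i), x.2 j * x.2 j)
        ≠ 0 := by rw [hsqrtval]; exact hn
    have hinv := (hasDerivAt_inv hsqrtne).comp_hasFDerivAt x hsqrt
    have hmul := (heval i).fun_mul hinv
    have hlin1 : HasFDerivAt
        (fun z : (Fin Q → ℝ) × (Fin N → ℝ) => ∑ j, (X.transpose * X) i j * z.2 j)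
        (∑ j, (X.transpose * X) i j • ((ContinuousLinearMap.proj j).comp
          (ContinuousLinearMap.snd ℝ (Fin Q → ℝ) (Fin N → ℝ)))) x :=
      HasFDerivAt.fun_sum fun j _ => (heval j).const_mul _
    have hlin2 : HasFDerivAt
        (fun z : (Fin Q → ℝ) × (Fin N → ℝ) => ∑ q, X.transpose i q * z.1 q)
        (∑ q, X.transpose i q • ((ContinuousLinearMap.proj q).comp
          (ContinuousLinearMap.fst ℝ (Fin Q → ℝ) (Fin N → ℝ)))) x :=
      HasFDerivAt.fun_sum fun q _ => (((ContinuousLinearMap.proj q).comp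
        (ContinuousLinearMap.fst ℝ (Fin Q → ℝ) (Fin N → ℝ))).hasFDerivAt).const_mul _
    have hfinal := (hlin1.sub hlin2).add (hmul.const_mul lam)
    refine hfinal.congr_fderiv ?_
    refine ContinuousLinearMap.ext fun z => ?_
    simp only [ContinuousLinearMap.coe_comp', Function.comp_apply,
      ContinuousLinearMap.proj_apply, ContinuousLinearMap.coe_snd',
      ContinuousLinearMap.coe_fst', ContinuousLinearMap.add_apply,
      ContinuousLinearMap.sub_apply, ContinuousLinearMap.smul_apply,
      ContinuousLinearMap.coe_sum', Finset.sum_apply, smul_eq_mul,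
      Amap_apply, Afun, if_pos h, Matrix.mulVec, dotProduct,
      Matrix.transpose_apply]
    rw [hsqrtval]
    have hsum2 : ∑ j ∈ Finset.univ.filter (fun j => c j = c i),
        (x.2 j * z.2 j + x.2 j * z.2 j)
        = 2 * ∑ j ∈ Finset.univ.filter (fun j => c j = c i), x.2 j * z.2 j := by
      rw [Finset.mul_sum]
      exact Finset.sum_congr rfl fun j _ => by ring
    rw [hsum2, ← hnn]
    field_simp
    ring
  · have hfun : (fun z : (Fin Q → ℝ) × (Fin N → ℝ) => Gmap X lam c P z i)
        = fun z => z.2 i := by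
      funext z; simp [Gmap, if_neg h]
    rw [hfun]
    refine (heval i).congr_fderiv ?_
    refine ContinuousLinearMap.ext fun z => ?_
    simp [Amap_apply, Afun, if_neg h]

lemma contDiffAt_Gmap (x : (Fin Q → ℝ) × (Fin N → ℝ))
    (hx : ∀ i, P (c i) → blockNorm c x.2 (c i) ≠ 0) :
    ContDiffAt ℝ 1 (Gmap X lam c P) x := by
  rw [contDiffAt_pi]
  intro i
  have hce : ∀ j, ContDiffAt ℝ 1 (fun z : (Fin Q → ℝ) × (Fin N → ℝ) => z.2 j) x :=
    fun j => (((ContinuousLinearMap.proj j).comp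
      (ContinuousLinearMap.snd ℝ (Fin Q → ℝ) (Fin N → ℝ))).contDiff).contDiffAt
  by_cases h : P (c i)
  · have hfun : (fun z : (Fin Q → ℝ) × (Fin N → ℝ) => Gmap X lam c P z i)
        = fun z => (∑ j, (X.transpose * X) i j * z.2 j) - (∑ q, X.transpose i q * z.1 q)
          + lam * (z.2 i * (Real.sqrt
              (∑ j ∈ Finset.univ.filter (fun j => c j = c i), z.2 j * z.2 j))⁻¹) := by
      funext z
      simp only [Gmap, if_pos h, blockNorm, Matrix.mulVec, dotProduct, div_eq_mul_inv,
        pow_two]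
    rw [hfun]
    have hS : ContDiffAt ℝ 1 (fun z : (Fin Q → ℝ) × (Fin N → ℝ) =>
        ∑ j ∈ Finset.univ.filter (fun j => c j = c i), z.2 j * z.2 j) x :=
      ContDiffAt.sum fun j _ => (hce j).mul (hce j)
    have hval : (∑ j ∈ Finset.univ.filter (fun j => c j = c i), x.2 j * x.2 j)
        = blockNorm c x.2 (c i) ^ 2 := by
      rw [blockNorm_sq]
      exact Finset.sum_congr rfl fun j _ => by ring
    have hS0 : (∑ j ∈ Finset.univ.filter (fun j => c j = c i), x.2 j * x.2 j) ≠ 0 := by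
      rw [hval]; exact pow_ne_zero _ (hx i h)
    have hsqrt : ContDiffAt ℝ 1 (fun z : (Fin Q → ℝ) × (Fin N → ℝ) =>
        Real.sqrt (∑ j ∈ Finset.univ.filter (fun j => c j = c i), z.2 j * z.2 j)) x := by
      have := (Real.contDiffAt_sqrt (n := 1) hS0).comp x hS
      exact this
    have hsqrtne : Real.sqrt (∑ j ∈ Finset.univ.filter (fun j => c j = c i), x.2 j * x.2 j)
        ≠ 0 := by
      rw [hval, Real.sqrt_sq (blockNorm_nonneg c x.2 (c i))]
      exact hx i h
    have hinv := hsqrt.inv hsqrtne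
    have hlin1 : ContDiffAt ℝ 1 (fun z : (Fin Q → ℝ) × (Fin N → ℝ) =>
        ∑ j, (X.transpose * X) i j * z.2 j) x :=
      ContDiffAt.sum fun j _ => contDiffAt_const.mul (hce j)
    have hlin2 : ContDiffAt ℝ 1 (fun z : (Fin Q → ℝ) × (Fin N → ℝ) =>
        ∑ q, X.transpose i q * z.1 q) x :=
      ContDiffAt.sum fun q _ => contDiffAt_const.mul
        ((((ContinuousLinearMap.proj q).comp
          (ContinuousLinearMap.fst ℝ (Fin Q → ℝ) (Fin N → ℝ))).contDiff).contDiffAt)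
    exact (hlin1.sub hlin2).add (contDiffAt_const.mul ((hce i).mul hinv))
  · have hfun : (fun z : (Fin Q → ℝ) × (Fin N → ℝ) => Gmap X lam c P z i)
        = fun z => z.2 i := by
      funext z; simp [Gmap, if_neg h]
    rw [hfun]
    exact hce i

lemma Afun_inj (hX : LinearIndependent ℝ X.transpose) (hlam : 0 < lam)
    (x : (Fin Q → ℝ) × (Fin N → ℝ)) (hP : ∀ k, P k → blockNorm c x.2 k ≠ 0)
    (v : Fin N → ℝ) (hv : Afun X lam c P x ((0 : Fin Q → ℝ), v) = 0) : v = 0 := by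
  have hv0 : ∀ i, ¬ P (c i) → v i = 0 := by
    intro i h
    have := congrFun hv i
    simpa [Afun, if_neg h] using this
  set n : Fin K → ℝ := fun k => blockNorm c x.2 k with hn
  set W : Fin K → ℝ := fun k => ∑ i ∈ Finset.univ.filter (fun i => c i = k), v i ^ 2 with hW
  set s : Fin K → ℝ := fun k => ∑ i ∈ Finset.univ.filter (fun i => c i = k), x.2 i * v i with hs
  have key1 : ∑ i, v i * (X.transpose * X).mulVec v i = ∑ q, (X.mulVec v q) ^ 2 := by
    rw [← Matrix.mulVec_mulVec]
    simp only [Matrix.mulVec, dotProduct, Matrix.transpose_apply]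
    have h1 : ∀ i : Fin N, v i * ∑ q, X q i * (∑ j, X q j * v j)
        = ∑ q, (v i * X q i) * (∑ j, X q j * v j) := by
      intro i; rw [Finset.mul_sum]; exact Finset.sum_congr rfl fun q _ => by ring
    rw [Finset.sum_congr rfl fun i _ => h1 i, Finset.sum_comm]
    refine Finset.sum_congr rfl fun q _ => ?_
    rw [← Finset.sum_mul, sq]
    congr 1
    exact Finset.sum_congr rfl fun i _ => mul_comm _ _
  have hpoint : ∀ i, v i * Afun X lam c P x ((0 : Fin Q → ℝ), v) i
      = v i * (X.transpose * X).mulVec v i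
        + lam * (v i ^ 2 / n (c i) - x.2 i * v i * s (c i) / n (c i) ^ 3) := by
    intro i
    by_cases h : P (c i)
    · simp only [Afun, if_pos h, Matrix.mulVec_zero, Pi.zero_apply, hn, hs]
      ring
    · simp [Afun, if_neg h, hv0 i h]
  have hsum0 : ∑ i, v i * Afun X lam c P x ((0 : Fin Q → ℝ), v) i = 0 := by
    rw [hv]; simp
  have hfib : ∑ i, (v i ^ 2 / n (c i) - x.2 i * v i * s (c i) / n (c i) ^ 3)
      = ∑ k, (W k / n k - s k * s k / n k ^ 3) := by
    rw [← Finset.sum_fiberwise_of_maps_to (fun i _ => Finset.mem_univ (c i))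
      (fun i => v i ^ 2 / n (c i) - x.2 i * v i * s (c i) / n (c i) ^ 3)]
    refine Finset.sum_congr rfl fun k _ => ?_
    have hcongr : ∀ i ∈ Finset.univ.filter (fun i => c i = k),
        v i ^ 2 / n (c i) - x.2 i * v i * s (c i) / n (c i) ^ 3
        = v i ^ 2 / n k - (x.2 i * v i) * (s k / n k ^ 3) := by
      intro i hi
      have hik : c i = k := by simpa using hi
      rw [hik]; ring
    rw [Finset.sum_congr rfl hcongr, Finset.sum_sub_distrib, ← Finset.sum_div,
      ← Finset.sum_mul, hW, hs]
    ring
  have claim : ∑ q, (X.mulVec v q) ^ 2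
      + lam * ∑ k, (W k / n k - s k * s k / n k ^ 3) = 0 := by
    rw [← hfib, ← key1, ← hsum0, Finset.mul_sum, ← Finset.sum_add_distrib]
    exact Finset.sum_congr rfl fun i _ => (hpoint i).symm
  have hterm : ∀ k, 0 ≤ W k / n k - s k * s k / n k ^ 3 := by
    intro k
    by_cases hPk : P k
    · have hnpos : 0 < n k := lt_of_le_of_ne (blockNorm_nonneg c x.2 k) (Ne.symm (hP k hPk))
      have hxsq : ∑ i ∈ Finset.univ.filter (fun i => c i = k), x.2 i ^ 2 = n k ^ 2 :=
        (blockNorm_sq c x.2 k).symm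
      have hcs : s k ^ 2 ≤ n k ^ 2 * W k := by
        have := Finset.sum_mul_sq_le_sq_mul_sq (Finset.univ.filter (fun i => c i = k))
          (fun i => x.2 i) (fun i => v i)
        rw [hxsq] at this
        exact this
      have h2 : s k * s k / n k ^ 3 ≤ (n k ^ 2 * W k) / n k ^ 3 := by
        rw [← sq]
        exact (div_le_div_iff_of_pos_right (pow_pos hnpos 3)).2 hcs
      have h3 : (n k ^ 2 * W k) / n k ^ 3 = W k / n k := by
        field_simp
      linarith [h2, h3 ▸ h2]
    · have hz : ∀ i ∈ Finset.univ.filter (fun i => c i = k), v i = 0 := by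
        intro i hi
        have hik : c i = k := by simpa using hi
        exact hv0 i (by rw [hik]; exact hPk)
      have hW0 : W k = 0 := Finset.sum_eq_zero fun i hi => by rw [hz i hi]; ring
      have hs0 : s k = 0 := Finset.sum_eq_zero fun i hi => by rw [hz i hi]; ring
      rw [hW0, hs0]
      simp
  have hXv : ∀ q, X.mulVec v q = 0 := by
    have hle : ∑ q, (X.mulVec v q) ^ 2 ≤ 0 := by
      have : 0 ≤ lam * ∑ k, (W k / n k - s k * s k / n k ^ 3) :=
        mul_nonneg hlam.le (Finset.sum_nonneg fun k _ => hterm k)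
      linarith
    have hzero : ∑ q, (X.mulVec v q) ^ 2 = 0 :=
      le_antisymm hle (Finset.sum_nonneg fun q _ => sq_nonneg _)
    intro q
    have := (Finset.sum_eq_zero_iff_of_nonneg (fun q _ => sq_nonneg (X.mulVec v q))).1
      hzero q (Finset.mem_univ q)
    exact pow_eq_zero_iff (two_ne_zero (α := ℕ)) |>.1 this
  have hlin := Fintype.linearIndependent_iff.1 hX v
  have : ∑ i, v i • X.transpose i = 0 := by
    funext q
    simp only [Finset.sum_apply, Pi.smul_apply, Matrix.transpose_apply, smul_eq_mul,
      Pi.zero_apply]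
    rw [← hXv q]
    simp only [Matrix.mulVec, dotProduct]
    exact Finset.sum_congr rfl fun i _ => mul_comm _ _
  funext i
  exact hlin this i

end GLasso

open GLasso in
/-- Sensitivity of the group Lasso solution: if the solution `β* = βs y` at `y`
has block support `I` and `‖X_bᵀ(y − X β*)‖ < λ` strictly for every block
`b ∉ I`, then on a neighborhood of `y` the solution map `βs` is C¹ with
constant block support `I`, its differential vanishes on `I^c`, and on `I` it
satisfies `(X_Iᵀ X_I + λ δ_{β*} ∘ P_{β*}) ∘ dβs = X_Iᵀ`, i.e. it equals
`(X_Iᵀ X_I + λ δ_{β*} ∘ P_{β*})⁻¹ X_Iᵀ`. -/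
theorem stmt_19 {Q N K : ℕ} (X : Matrix (Fin Q) (Fin N) ℝ)
    (hX : LinearIndependent ℝ X.transpose)
    (lam : ℝ) (hlam : 0 < lam) (c : Fin N → Fin K)
    (βs : (Fin Q → ℝ) → (Fin N → ℝ))
    (hmin : ∀ y : Fin Q → ℝ, IsMinOn (groupLassoObj X y lam c) Set.univ (βs y))
    (huniq : ∀ (y : Fin Q → ℝ) (β : Fin N → ℝ),
      IsMinOn (groupLassoObj X y lam c) Set.univ β → β = βs y)
    (y : Fin Q → ℝ)
    (hstrict : ∀ k : Fin K, (∀ i, c i = k → βs y i = 0) →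
      blockNorm c (X.transpose.mulVec (y - X.mulVec (βs y))) k < lam) :
    ∃ O : Set (Fin Q → ℝ), IsOpen O ∧ y ∈ O ∧
      -- the block support is locally constant, equal to the one at `y`
      (∀ ybar ∈ O, ∀ k : Fin K,
        (∃ i, c i = k ∧ βs ybar i ≠ 0) ↔ (∃ i, c i = k ∧ βs y i ≠ 0)) ∧
      -- the solution map is C¹ on `O`
      ContDiffOn ℝ 1 βs O ∧
      -- and its differential is characterized as follows
      (∀ ybar ∈ O, ∃ D : (Fin Q → ℝ) →L[ℝ] (Fin N → ℝ),
        HasFDerivAt βs D ybar ∧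
        -- the differential vanishes outside the support
        (∀ (v : Fin Q → ℝ) (i : Fin N),
          (∀ j, c j = c i → βs ybar j = 0) → D v i = 0) ∧
        -- on the support, `(X_Iᵀ X_I + λ δ ∘ P) (D v) = X_Iᵀ v`,
        -- i.e. `D` restricted to `I` equals `(X_Iᵀ X_I + λ δ ∘ P)⁻¹ X_Iᵀ`
        (∀ (v : Fin Q → ℝ) (i : Fin N),
          (∃ j, c j = c i ∧ βs ybar j ≠ 0) →
          (X.transpose * X).mulVec (D v) i +
            lam / blockNorm c (βs ybar) (c i) *
              (D v i -
                (∑ j ∈ Finset.univ.filter (fun j => c j = c i),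
                    βs ybar j * D v j) /
                  (blockNorm c (βs ybar) (c i)) ^ 2 * βs ybar i)
            = X.transpose.mulVec v i)) := by
  classical
  set P : Fin K → Prop := fun k => ∃ i, c i = k ∧ βs y i ≠ 0 with hPdef
  letI : DecidablePred P := Classical.decPred P
  set E := (Fin Q → ℝ) × (Fin N → ℝ)
  set x₀ : E := (y, βs y) with hx₀
  have hzero : ∀ i, ¬ P (c i) → βs y i = 0 := by
    intro i h
    by_contra hne
    exact h ⟨i, rfl, hne⟩
  have hPbn : ∀ k, P k → blockNorm c (βs y) k ≠ 0 :=
    fun k hp => (blockNorm_pos c (βs y) k hp).ne'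
  have h1 : ∀ i, P (c i) → blockNorm c (x₀.2) (c i) ≠ 0 := fun i hp => hPbn (c i) hp
  have hbase0 : Gmap X lam c P x₀ = 0 := by
    funext i
    by_cases h : P (c i)
    · simp only [Gmap, if_pos h, Pi.zero_apply]
      exact kkt_stat X lam c y (βs y) (hmin y) i (h1 i h)
    · simp only [Gmap, if_neg h, Pi.zero_apply]
      exact hzero i h
  set Φ : E → E := fun z => (z.1, Gmap X lam c P z) with hΦdef
  set A₀ := Amap X lam c P x₀ with hA₀
  set Φ' : E →L[ℝ] E := (ContinuousLinearMap.fst ℝ (Fin Q → ℝ) (Fin N → ℝ)).prod A₀ with hΦ'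
  have hΦder : HasFDerivAt Φ Φ' x₀ :=
    (hasFDerivAt_fst).prodMk (hasFDerivAt_Gmap X lam c P x₀ h1)
  have hΦcd : ContDiffAt ℝ 1 Φ x₀ :=
    (contDiff_fst.contDiffAt).prodMk (contDiffAt_Gmap X lam c P x₀ h1)
  -- Φ' is bijective
  have hker : ∀ z : E, Φ' z = 0 → z = 0 := by
    intro z hz
    have hz1 : z.1 = 0 := congrArg Prod.fst hz
    have hz2 : A₀ z = 0 := congrArg Prod.snd hz
    have hzz : z = ((0 : Fin Q → ℝ), z.2) := by rw [← hz1]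
    rw [hzz] at hz2
    have hv : z.2 = 0 := by
      apply Afun_inj X lam c P hX hlam x₀ (fun k hp => hPbn k hp) z.2
      rw [← Amap_apply X lam c P]
      exact hz2
    rw [hzz, hv]
    rfl
  have hinj : Function.Injective Φ' := by
    rw [injective_iff_map_eq_zero]
    exact hker
  have hsurj : Function.Surjective Φ' :=
    LinearMap.injective_iff_surjective.1 hinj
  set e : E ≃L[ℝ] E :=
    LinearEquiv.toContinuousLinearEquiv
      (LinearEquiv.ofBijective (Φ' : E →ₗ[ℝ] E) ⟨hinj, hsurj⟩) with he
  have hecoe : (e : E →L[ℝ] E) = Φ' := by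
    refine ContinuousLinearMap.ext fun z => ?_
    rfl
  have hΦ'der : HasFDerivAt Φ (e : E →L[ℝ] E) x₀ := by rw [hecoe]; exact hΦder
  set Ψ := hΦcd.localInverse hΦ'der one_ne_zero with hΨ
  have hΨcd : ContDiffAt ℝ 1 Ψ (Φ x₀) := hΦcd.to_localInverse hΦ'der one_ne_zero
  have hΨx₀ : Ψ (Φ x₀) = x₀ := hΦcd.localInverse_apply_image hΦ'der one_ne_zero
  have hstr := hΦcd.hasStrictFDerivAt' hΦ'der one_ne_zero
  have hright : ∀ᶠ z in nhds (Φ x₀), Φ (Ψ z) = z := hstr.eventually_right_inverse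
  have hΦx₀ : Φ x₀ = (y, (0 : Fin N → ℝ)) := by
    rw [hΦdef]
    simp only
    rw [hbase0]
  set bhat : (Fin Q → ℝ) → (Fin N → ℝ) := fun w => (Ψ (w, 0)).2 with hbhat
  have hbhaty : bhat y = βs y := by
    have : Ψ ((y, (0 : Fin N → ℝ)) : E) = x₀ := by rw [← hΦx₀]; exact hΨx₀
    rw [hbhat]
    simp only
    rw [this]
  -- C¹ of bhat near y
  have hpaircd : ContDiffAt ℝ 1 (fun w : Fin Q → ℝ => ((w, (0 : Fin N → ℝ)) : E)) y :=
    contDiffAt_id.prodMk contDiffAt_const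
  have hΨcd' : ContDiffAt ℝ 1 Ψ ((y, (0 : Fin N → ℝ)) : E) := by rw [← hΦx₀]; exact hΨcd
  have hbcd : ContDiffAt ℝ 1 bhat y := by
    have h2 := hΨcd'.comp y hpaircd
    have h3 := (contDiff_snd.contDiffAt
      (x := Ψ ((y, (0 : Fin N → ℝ)) : E))).comp y h2
    exact h3
  obtain ⟨u, hu, hucd⟩ := hbcd.contDiffOn le_rfl (by intro h; exact absurd h (by norm_num))
  set U₁ := interior u with hU₁
  have hU₁open : IsOpen U₁ := isOpen_interior
  have hyU₁ : y ∈ U₁ := mem_interior_iff_mem_nhds.2 hu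
  have hU₁cd : ContDiffOn ℝ 1 bhat U₁ := hucd.mono interior_subset
  -- right-inverse neighborhood
  have hrev : ∀ᶠ w in nhds y, Φ (Ψ (w, 0)) = ((w, (0 : Fin N → ℝ)) : E) := by
    have hcont : ContinuousAt (fun w : Fin Q → ℝ => ((w, (0 : Fin N → ℝ)) : E)) y :=
      (continuous_id.prodMk continuous_const).continuousAt
    have h4 : ∀ᶠ z in nhds ((y, (0 : Fin N → ℝ)) : E), Φ (Ψ z) = z := by
      rw [← hΦx₀]; exact hright
    exact hcont.tendsto.eventually h4
  obtain ⟨U₂, hU₂prop, hU₂open, hyU₂⟩ := eventually_nhds_iff.1 hrev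
  -- the open condition set
  set T : Set E := {z : E | (∀ k, P k → blockNorm c z.2 k ≠ 0)
    ∧ (∀ k, ¬ P k → blockNorm c (X.transpose.mulVec (z.1 - X.mulVec z.2)) k < lam)} with hT
  have hbnc : ∀ k : Fin K, Continuous fun z : E => blockNorm c z.2 k := by
    intro k
    apply Real.continuous_sqrt.comp
    exact continuous_finset_sum _ fun j _ => ((continuous_apply j).comp continuous_snd).pow 2
  have hresc : ∀ k : Fin K, Continuous fun z : E =>
      blockNorm c (X.transpose.mulVec (z.1 - X.mulVec z.2)) k := by
    intro k
    apply Real.continuous_sqrt.comp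
    refine continuous_finset_sum _ fun i _ => Continuous.pow ?_ 2
    show Continuous fun z : E => ∑ q, X.transpose i q * (z.1 q - ∑ j, X q j * z.2 j)
    refine continuous_finset_sum _ fun q _ => Continuous.mul continuous_const ?_
    exact ((continuous_apply q).comp continuous_fst).sub
      (continuous_finset_sum _ fun j _ =>
        Continuous.mul continuous_const ((continuous_apply j).comp continuous_snd))
  have hTopen : IsOpen T := by
    have : T = (⋂ k : Fin K, {z : E | P k → blockNorm c z.2 k ≠ 0})
        ∩ ⋂ k : Fin K, {z : E | ¬ P k →
            blockNorm c (X.transpose.mulVec (z.1 - X.mulVec z.2)) k < lam} := by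
      ext z
      simp only [hT, Set.mem_setOf_eq, Set.mem_inter_iff, Set.mem_iInter]
    rw [this]
    refine IsOpen.inter (isOpen_iInter_of_finite fun k => ?_)
      (isOpen_iInter_of_finite fun k => ?_)
    · by_cases hp : P k
      · have : {z : E | P k → blockNorm c z.2 k ≠ 0}
            = (fun z : E => blockNorm c z.2 k) ⁻¹' ({0}ᶜ) := by
          ext z; simp [hp]
        rw [this]
        exact (isOpen_compl_singleton).preimage (hbnc k)
      · have : {z : E | P k → blockNorm c z.2 k ≠ 0} = Set.univ := by
          ext z; simp [hp]
        rw [this]; exact isOpen_univ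
    · by_cases hp : P k
      · have : {z : E | ¬ P k →
            blockNorm c (X.transpose.mulVec (z.1 - X.mulVec z.2)) k < lam} = Set.univ := by
          ext z; simp [hp]
        rw [this]; exact isOpen_univ
      · have : {z : E | ¬ P k →
            blockNorm c (X.transpose.mulVec (z.1 - X.mulVec z.2)) k < lam}
            = (fun z : E => blockNorm c (X.transpose.mulVec (z.1 - X.mulVec z.2)) k)
              ⁻¹' (Set.Iio lam) := by
          ext z; simp [hp]
        rw [this]
        exact (isOpen_Iio).preimage (hresc k)
  -- the neighborhood O
  have hmapco : ContinuousOn (fun w : Fin Q → ℝ => ((w, bhat w) : E)) (U₁ ∩ U₂) :=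
    (continuous_id.continuousOn).prodMk
      ((hU₁cd.continuousOn).mono Set.inter_subset_left)
  set O : Set (Fin Q → ℝ) := (U₁ ∩ U₂) ∩ (fun w => ((w, bhat w) : E)) ⁻¹' T with hO
  have hOopen : IsOpen O :=
    hmapco.isOpen_inter_preimage (hU₁open.inter hU₂open) hTopen
  have hyO : y ∈ O := by
    refine ⟨⟨hyU₁, hyU₂⟩, ?_⟩
    rw [Set.mem_preimage, hbhaty]
    constructor
    · exact fun k hp => hPbn k hp
    · intro k hp
      exact hstrict k (fun i hik => hzero i (by rw [hik]; exact hp))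
  -- identification: on O, Ψ(w,0) = (w, bhat w) and G = 0
  have hid : ∀ w ∈ O, (Ψ ((w, (0 : Fin N → ℝ)) : E)) = ((w, bhat w) : E)
      ∧ Gmap X lam c P ((w, bhat w) : E) = 0 := by
    intro w hw
    have hU₂w : w ∈ U₂ := hw.1.2
    have hfe := hU₂prop w hU₂w
    have hfst : (Ψ ((w, (0 : Fin N → ℝ)) : E)).1 = w := by
      have := congrArg Prod.fst hfe
      simpa [hΦdef] using this
    have hpair : (Ψ ((w, (0 : Fin N → ℝ)) : E)) = ((w, bhat w) : E) := by
      rw [hbhat]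
      exact Prod.ext hfst rfl
    refine ⟨hpair, ?_⟩
    have := congrArg Prod.snd hfe
    rw [hΦdef] at this
    simp only at this
    rw [hpair] at this
    exact this
  -- On O, βs = bhat
  have hbs : ∀ w ∈ O, βs w = bhat w := by
    intro w hw
    have hG0 := (hid w hw).2
    have hTw : ((w, bhat w) : E) ∈ T := hw.2
    have hbz : ∀ i, ¬ P (c i) → bhat w i = 0 := by
      intro i h
      have := congrFun hG0 i
      simpa [Gmap, if_neg h] using this
    refine (huniq w (bhat w) ?_).symm
    apply kkt_sufficient X hlam c w (bhat w)
    · intro i hbn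
      by_cases hp : P (c i)
      · have := congrFun hG0 i
        simpa [Gmap, if_pos hp] using this
      · exfalso
        apply hbn
        apply blockNorm_zero
        intro j hj
        exact hbz j (by rw [hj]; exact hp)
    · intro k hk
      by_cases hp : P k
      · exact absurd (blockNorm_zero c (bhat w) k hk) (hTw.1 k hp)
      · exact (hTw.2 k hp).le
  -- support constancy
  have hsupp : ∀ w ∈ O, ∀ k : Fin K, (∃ i, c i = k ∧ βs w i ≠ 0) ↔ P k := by
    intro w hw k
    have hG0 := (hid w hw).2
    have hTw : ((w, bhat w) : E) ∈ T := hw.2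
    have hbz : ∀ i, ¬ P (c i) → bhat w i = 0 := by
      intro i h
      have := congrFun hG0 i
      simpa [Gmap, if_neg h] using this
    rw [hbs w hw]
    constructor
    · rintro ⟨i, hik, hne⟩
      by_contra hp
      exact hne (hbz i (by rw [hik]; exact hp))
    · intro hp
      obtain ⟨i, hik, hne⟩ := exists_ne_zero_of_blockNorm_ne_zero (hTw.1 k hp)
      exact ⟨i, hik, hne⟩
  have hOU₁ : O ⊆ U₁ := fun w hw => hw.1.1
  have hcdOn : ContDiffOn ℝ 1 βs O := by
    refine ContDiffOn.congr (hU₁cd.mono hOU₁) ?_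
    intro w hw
    exact hbs w hw
  refine ⟨O, hOopen, hyO, ?_, hcdOn, ?_⟩
  · intro ybar hy k
    exact hsupp ybar hy k
  · intro ybar hy
    have hdiffOn : DifferentiableOn ℝ bhat U₁ := hU₁cd.differentiableOn one_ne_zero
    have hdAt : DifferentiableAt ℝ bhat ybar :=
      (hdiffOn ybar (hOU₁ hy)).differentiableAt (hU₁open.mem_nhds (hOU₁ hy))
    set D := fderiv ℝ bhat ybar with hD
    have hder : HasFDerivAt bhat D ybar := hdAt.hasFDerivAt
    have hev : βs =ᶠ[nhds ybar] bhat :=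
      Filter.eventuallyEq_of_mem (hOopen.mem_nhds hy) hbs
    have hβsder : HasFDerivAt βs D ybar := hder.congr_of_eventuallyEq hev
    refine ⟨D, hβsder, ?_, ?_⟩
    · -- vanishing off the support
      intro v i hz
      have hp : ¬ P (c i) := by
        intro hp
        obtain ⟨j, hjk, hne⟩ := (hsupp ybar hy (c i)).2 hp
        exact hne (hz j hjk)
      have hevz : (fun w => bhat w i) =ᶠ[nhds ybar] fun _ => 0 := by
        refine Filter.eventuallyEq_of_mem (hOopen.mem_nhds hy) ?_
        intro w hw
        have hG0 := (hid w hw).2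
        have := congrFun hG0 i
        simpa [Gmap, if_neg hp] using this
      have hcomp : HasFDerivAt (fun w => bhat w i)
          ((ContinuousLinearMap.proj i).comp D) ybar :=
        (ContinuousLinearMap.proj i :
          (Fin N → ℝ) →L[ℝ] ℝ).hasFDerivAt.comp ybar hder
      have hzeroder : HasFDerivAt (fun w : Fin Q → ℝ => (0 : ℝ))
          (0 : (Fin Q → ℝ) →L[ℝ] ℝ) ybar := hasFDerivAt_const 0 ybar
      have hcomp' : HasFDerivAt (fun w => bhat w i)
          (0 : (Fin Q → ℝ) →L[ℝ] ℝ) ybar :=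
        hzeroder.congr_of_eventuallyEq hevz
      have : ((ContinuousLinearMap.proj i).comp D) = (0 : (Fin Q → ℝ) →L[ℝ] ℝ) :=
        hcomp.unique hcomp'
      have := congrArg (fun (L : (Fin Q → ℝ) →L[ℝ] ℝ) => L v) this
      simpa using this
    · -- the derivative equation on the support
      intro v i hex
      have hp : P (c i) := (hsupp ybar hy (c i)).1 hex
      have hybbn : ∀ i', P (c i') → blockNorm c (βs ybar) (c i') ≠ 0 := by
        intro i' hp'
        exact (blockNorm_pos c (βs ybar) (c i') ((hsupp ybar hy (c i')).2 hp')).ne'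
      set xb : E := (ybar, βs ybar) with hxb
      have hGder := hasFDerivAt_Gmap X lam c P xb hybbn
      have hpairder : HasFDerivAt (fun w : Fin Q → ℝ => ((w, βs w) : E))
          ((ContinuousLinearMap.id ℝ (Fin Q → ℝ)).prod D) ybar :=
        (hasFDerivAt_id ybar).prodMk hβsder
      have hchain := hGder.comp ybar hpairder
      have hevG : (fun w => Gmap X lam c P ((w, βs w) : E)) =ᶠ[nhds ybar]
          fun _ => (0 : Fin N → ℝ) := by
        refine Filter.eventuallyEq_of_mem (hOopen.mem_nhds hy) ?_
        intro w hw
        show Gmap X lam c P ((w, βs w) : E) = 0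
        rw [hbs w hw]
        exact (hid w hw).2
      have hzeroder : HasFDerivAt (fun _ : Fin Q → ℝ => (0 : Fin N → ℝ))
          (0 : (Fin Q → ℝ) →L[ℝ] (Fin N → ℝ)) ybar := hasFDerivAt_const _ _
      have hchain' : HasFDerivAt (fun w => Gmap X lam c P ((w, βs w) : E))
          (0 : (Fin Q → ℝ) →L[ℝ] (Fin N → ℝ)) ybar :=
        hzeroder.congr_of_eventuallyEq hevG
      have hCLM : (Amap X lam c P xb).comp
          ((ContinuousLinearMap.id ℝ (Fin Q → ℝ)).prod D) = 0 := by
        have h5 : HasFDerivAt ((Gmap X lam c P) ∘ (fun w : Fin Q → ℝ => ((w, βs w) : E)))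
            ((Amap X lam c P xb).comp
              ((ContinuousLinearMap.id ℝ (Fin Q → ℝ)).prod D)) ybar := hchain
        exact h5.unique hchain'
      have happ := congrArg (fun (L : (Fin Q → ℝ) →L[ℝ] (Fin N → ℝ)) => L v i) hCLM
      simp only [ContinuousLinearMap.comp_apply, ContinuousLinearMap.prod_apply,
        ContinuousLinearMap.id_apply, ContinuousLinearMap.zero_apply, Pi.zero_apply] at happ
      rw [Amap_apply X lam c P] at happ
      have heq : (X.transpose * X).mulVec (D v) i - X.transpose.mulVec v i
          + lam * (D v i / blockNorm c (βs ybar) (c i)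
            - βs ybar i * (∑ j ∈ Finset.univ.filter (fun j => c j = c i),
                βs ybar j * D v j) / blockNorm c (βs ybar) (c i) ^ 3) = 0 := by
        have := happ
        simpa [Afun, if_pos hp, hxb] using this
      set n := blockNorm c (βs ybar) (c i) with hn
      have hnne : n ≠ 0 := hybbn i hp
      set s := ∑ j ∈ Finset.univ.filter (fun j => c j = c i), βs ybar j * D v j with hs
      have hfield : lam / n * (D v i - s / n ^ 2 * βs ybar i)
          = lam * (D v i / n - βs ybar i * s / n ^ 3) := by
        field_simp
      rw [hfield]
      linarith [heq]
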